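/- Let A > 0 and let φ : [1, ∞) → (0, ∞) be given by φ(s) = As/(2 + log s). Let g : [0, ∞) → [1, ∞) be continuous and satisfy the integral inequality g(t) ≤ g(0) + ∫₀ᵗ φ(g(s)) ds for all t ≥ 0. Then g(t) ≤ g(0) · exp(√(2At)) for all t ≥ 0. -/

import Mathlib

open Real Set MeasureTheory intervalIntegral

private lemma key_ineq {x y : ℝ} (hx : 1 ≤ x) (hxy : x ≤ y) :
    x * (2 + Real.log y) ≤ y * (2 + Real.log x) := by
  have hx0 : (0:ℝ) < x := by linarith
  have hy0 : (0:ℝ) < y := by linarith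
  have hlx : 0 ≤ Real.log x := Real.log_nonneg hx
  have h1 : Real.log (y / x) ≤ y / x - 1 := Real.log_le_sub_one_of_pos (div_pos hy0 hx0)
  rw [Real.log_div hy0.ne' hx0.ne'] at h1
  have h2 : x * (Real.log y - Real.log x) ≤ y - x := by
    have := mul_le_mul_of_nonneg_left h1 hx0.le
    calc x * (Real.log y - Real.log x) ≤ x * (y / x - 1) := this
      _ = y - x := by field_simp
  nlinarith [mul_nonneg (sub_nonneg.2 hxy) hlx]

theorem stmt_16 (A : ℝ) (hA : 0 < A) (g : ℝ → ℝ)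
    (hgc : ContinuousOn g (Ici (0 : ℝ)))
    (hg1 : ∀ t ∈ Ici (0 : ℝ), 1 ≤ g t)
    (hint : ∀ t ∈ Ici (0 : ℝ),
      g t ≤ g 0 + ∫ s in (0 : ℝ)..t, A * g s / (2 + Real.log (g s))) :
    ∀ t ∈ Ici (0 : ℝ), g t ≤ g 0 * exp (Real.sqrt (2 * A * t)) := by
  set F : ℝ → ℝ := fun s => A * g s / (2 + Real.log (g s)) with hF
  -- basic positivity facts
  have hgpos : ∀ t ∈ Ici (0:ℝ), (0:ℝ) < g t := fun t ht => lt_of_lt_of_le one_pos (hg1 t ht)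
  have hden : ∀ t ∈ Ici (0:ℝ), (0:ℝ) < 2 + Real.log (g t) := by
    intro t ht
    have := Real.log_nonneg (hg1 t ht)
    linarith
  -- continuity of F on Ici 0
  have hFc : ContinuousOn F (Ici (0:ℝ)) := by
    apply ContinuousOn.div (continuousOn_const.mul hgc)
    · exact continuousOn_const.add (Real.continuousOn_log.comp hgc
        (fun t ht => (hgpos t ht).ne' ))
    · exact fun t ht => (hden t ht).ne'
  -- F is nonneg on Ici 0
  have hFnn : ∀ t ∈ Ici (0:ℝ), 0 ≤ F t := by
    intro t ht
    exact div_nonneg (mul_nonneg hA.le (hgpos t ht).le) (hden t ht).le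
  -- interval integrability
  have hFi : ∀ t ∈ Ici (0:ℝ), IntervalIntegrable F volume 0 t := by
    intro t ht
    apply ContinuousOn.intervalIntegrable
    apply hFc.mono
    rw [uIcc_of_le ht]
    exact Icc_subset_Ici_self
  set G : ℝ → ℝ := fun t => g 0 + ∫ s in (0:ℝ)..t, F s with hG
  -- derivative of G within Ici 0
  have hGd : ∀ t ∈ Ici (0:ℝ), HasDerivWithinAt G (F t) (Ici 0) t := by
    intro t ht
    rcases eq_or_lt_of_le (mem_Ici.1 ht) with h0 | h0
    · -- t = 0
      subst h0
      have h1 : HasDerivWithinAt (fun u => ∫ s in (0:ℝ)..u, F s) (F 0) (Ici 0) 0 := by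
        apply intervalIntegral.integral_hasDerivWithinAt_right
          (hFi 0 self_mem_Ici) (t := Ioi (0:ℝ))
        · exact ⟨Ioi 0, self_mem_nhdsWithin,
            (hFc.mono Ioi_subset_Ici_self).aestronglyMeasurable measurableSet_Ioi⟩
        · exact (hFc 0 self_mem_Ici).mono Ioi_subset_Ici_self
      exact ((hasDerivWithinAt_const (0:ℝ) (Ici (0:ℝ)) (g 0)).add h1).congr_deriv (zero_add _)
    · -- t > 0 : full derivative
      have hmem : Ici (0:ℝ) ∈ nhds t := Ici_mem_nhds h0
      have hFcont : ContinuousAt F t :=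
        (hFc t (le_of_lt h0)).continuousAt hmem
      have hmeas : StronglyMeasurableAtFilter F (nhds t) volume :=
        ContinuousOn.stronglyMeasurableAtFilter isOpen_Ioi (hFc.mono Ioi_subset_Ici_self) t h0
      have h1 := intervalIntegral.integral_hasDerivAt_right (hFi t (le_of_lt h0)) hmeas hFcont
      exact (((hasDerivAt_const t (g 0)).add h1).hasDerivWithinAt (s := Ici (0:ℝ))).congr_deriv (zero_add _)
  -- G ≥ g ≥ 1 on Ici 0
  have hgG : ∀ t ∈ Ici (0:ℝ), g t ≤ G t := hint
  have hG1 : ∀ t ∈ Ici (0:ℝ), 1 ≤ G t := fun t ht => le_trans (hg1 t ht) (hgG t ht)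
  have hGpos : ∀ t ∈ Ici (0:ℝ), (0:ℝ) < G t := fun t ht => lt_of_lt_of_le one_pos (hG1 t ht)
  have hGden : ∀ t ∈ Ici (0:ℝ), (0:ℝ) < 2 + Real.log (G t) := by
    intro t ht
    have := Real.log_nonneg (hG1 t ht)
    linarith
  -- ψ = (2 + log G)^2 - 2At is antitone on Ici 0
  set ψ : ℝ → ℝ := fun t => (2 + Real.log (G t))^2 - 2*A*t with hψ
  have hψd : ∀ t ∈ Ici (0:ℝ), HasDerivWithinAt ψ
      (2 * (2 + Real.log (G t)) * (F t / G t) - 2*A) (Ici 0) t := by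
    intro t ht
    have hlog : HasDerivWithinAt (fun u => Real.log (G u)) (F t / G t) (Ici 0) t :=
      (hGd t ht).log (hGpos t ht).ne'
    have hsq : HasDerivWithinAt (fun u => (2 + Real.log (G u))^2)
        (2 * (2 + Real.log (G t))^1 * (F t / G t)) (Ici 0) t := by
      have := ((hasDerivWithinAt_const t (Ici (0:ℝ)) (2:ℝ)).add hlog).pow 2
      simpa [Pi.add_def, Pi.pow_def] using this
    have h := hsq.sub (((hasDerivAt_id t).const_mul (2*A)).hasDerivWithinAt)
    exact h.congr_deriv (by ring)
  have hψanti : AntitoneOn ψ (Ici (0:ℝ)) := by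
    apply antitoneOn_of_deriv_nonpos (convex_Ici 0)
    · exact fun t ht => ((hψd t ht).continuousWithinAt)
    · intro t ht
      rw [interior_Ici] at ht
      exact ((hψd t (mem_Ici.2 (le_of_lt (mem_Ioi.1 ht)))).hasDerivAt (Ici_mem_nhds ht)).differentiableAt.differentiableWithinAt
    · intro t ht
      rw [interior_Ici] at ht
      have ht' : t ∈ Ici (0:ℝ) := mem_Ici.2 (le_of_lt (mem_Ioi.1 ht))
      rw [((hψd t ht').hasDerivAt (Ici_mem_nhds ht)).deriv]
      -- need: 2 (2+log G t) (F t / G t) ≤ 2 A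
      have hkey : g t * (2 + Real.log (G t)) ≤ G t * (2 + Real.log (g t)) :=
        key_ineq (hg1 t ht') (hgG t ht')
      have hGt := hGpos t ht'
      have hdt := hden t ht'
      have hFt : F t = A * g t / (2 + Real.log (g t)) := rfl
      have h2 : (2 + Real.log (G t)) * F t ≤ A * G t := by
        have e : (2 + Real.log (G t)) * (A * g t / (2 + Real.log (g t)))
            = A * (g t * (2 + Real.log (G t))) / (2 + Real.log (g t)) := by ring
        rw [hFt, e, div_le_iff₀ hdt]
        nlinarith [mul_le_mul_of_nonneg_left hkey hA.le]
      have h3 : (2 + Real.log (G t)) * (F t / G t) ≤ A := by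
        rw [← mul_div_assoc, div_le_iff₀ hGt]
        exact h2
      nlinarith [h3]
  -- main estimate
  intro t ht
  have hψt : ψ t ≤ ψ 0 := hψanti self_mem_Ici ht (mem_Ici.1 ht)
  have hG0 : G 0 = g 0 := by simp [hG]
  have hbound : (2 + Real.log (G t))^2 ≤ (2 + Real.log (g 0))^2 + 2*A*t := by
    have : ψ 0 = (2 + Real.log (g 0))^2 := by simp [hψ, hG0]
    rw [this] at hψt
    simp only [hψ] at hψt
    linarith
  have h0mem : (0:ℝ) ∈ Ici (0:ℝ) := self_mem_Ici
  set c : ℝ := 2 + Real.log (g 0) with hc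
  have hc2 : (2:ℝ) ≤ c := by
    have := Real.log_nonneg (hg1 0 h0mem)
    simp [hc]; linarith
  have hs : Real.sqrt (2*A*t) ^ 2 = 2*A*t := Real.sq_sqrt (by nlinarith [mem_Ici.1 ht, hA.le] : (0:ℝ) ≤ 2*A*t)
  -- (2 + log G t) ≤ c + sqrt (2 A t)
  have hstep : 2 + Real.log (G t) ≤ c + Real.sqrt (2*A*t) := by
    nlinarith [hbound, hGden t ht, Real.sqrt_nonneg (2*A*t), hs, hc2]
  -- conclude
  have hloggt : Real.log (g t) ≤ Real.log (G t) :=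
    Real.log_le_log (hgpos t ht) (hgG t ht)
  have hfinal : Real.log (g t) ≤ Real.log (g 0) + Real.sqrt (2*A*t) := by
    simp only [hc] at hstep; linarith
  calc g t = Real.exp (Real.log (g t)) := (Real.exp_log (hgpos t ht)).symm
    _ ≤ Real.exp (Real.log (g 0) + Real.sqrt (2*A*t)) := Real.exp_le_exp.2 hfinal
    _ = g 0 * Real.exp (Real.sqrt (2*A*t)) := by
        rw [Real.exp_add, Real.exp_log (hgpos 0 h0mem)]
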